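/- Monotonicity of β for the SSL prior: the function β = g_1/g_0 − 1 is strictly increasing on the interval [2λ_1, √(2 log n)], for n large enough. -/

import Mathlib

/-!
Statement 14: monotonicity of β for the spike and slab LASSO prior.
-/

open MeasureTheory Real Set

noncomputable section

/-- Standard normal density. -/
def phi (x : ℝ) : ℝ := Real.exp (-x ^ 2 / 2) / Real.sqrt (2 * Real.pi)

/-- Spike inverse-scale `λ₀ = 5√(2π) n`. -/
def lam0 (n : ℕ) : ℝ := 5 * Real.sqrt (2 * Real.pi) * n

/-- Slab scale parameter `λ₁ = 0.05`. -/
def lam1 : ℝ := 0.05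

/-- Spike density: Laplace with parameter `λ₀`. -/
def gamma0 (n : ℕ) (x : ℝ) : ℝ := lam0 n / 2 * Real.exp (-(lam0 n) * |x|)

/-- Slab density: Cauchy with scale `1/λ₁`. -/
def gamma1 (x : ℝ) : ℝ := lam1 / Real.pi * (1 + lam1 ^ 2 * x ^ 2)⁻¹

/-- `g₀ = φ * γ₀`. -/
def g0 (n : ℕ) (x : ℝ) : ℝ := ∫ u, phi (x - u) * gamma0 n u

/-- `g₁ = φ * γ₁`. -/
def g1 (x : ℝ) : ℝ := ∫ u, phi (x - u) * gamma1 u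

/-- `β(x) = g₁(x)/g₀(x) - 1` for the SSL prior. -/
def betaSSL (n : ℕ) (x : ℝ) : ℝ := g1 x / g0 n x - 1

lemma sqrt2pi_pos : 0 < Real.sqrt (2 * Real.pi) := Real.sqrt_pos.2 (by positivity)

lemma sqrt2pi_ge : (2.4 : ℝ) ≤ Real.sqrt (2 * Real.pi) := by
  rw [show (2.4:ℝ) = Real.sqrt (2.4^2) by rw [Real.sqrt_sq]; norm_num]
  apply Real.sqrt_le_sqrt
  nlinarith [Real.pi_gt_three]

lemma sqrt2pi_le : Real.sqrt (2 * Real.pi) ≤ 3 := by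
  rw [show (3:ℝ) = Real.sqrt (3^2) by rw [Real.sqrt_sq]; norm_num]
  apply Real.sqrt_le_sqrt
  nlinarith [Real.pi_lt_d2]

lemma phi_pos (x : ℝ) : 0 < phi x := div_pos (Real.exp_pos _) sqrt2pi_pos

lemma phi_le_one (x : ℝ) : phi x ≤ 1 := by
  rw [phi, div_le_one sqrt2pi_pos]
  calc Real.exp (-x^2/2) ≤ 1 := by
        rw [Real.exp_le_one_iff]; nlinarith [sq_nonneg x]
    _ ≤ Real.sqrt (2*Real.pi) := by linarith [sqrt2pi_ge]

lemma phi_anti {x y : ℝ} (h : |x| ≤ |y|) : phi y ≤ phi x := by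
  have : Real.exp (-y^2/2) ≤ Real.exp (-x^2/2) := by
    rw [Real.exp_le_exp]
    have := sq_abs x; have := sq_abs y
    nlinarith [abs_nonneg x, abs_nonneg y]
  exact div_le_div_of_nonneg_right this sqrt2pi_pos.le

lemma lam0_ge {n : ℕ} (hn : 1 ≤ n) : 12 * (n:ℝ) ≤ lam0 n := by
  have : (1:ℝ) ≤ n := by exact_mod_cast hn
  have := sqrt2pi_ge
  rw [lam0]; nlinarith

lemma lam0_pos {n : ℕ} (hn : 1 ≤ n) : 0 < lam0 n := by
  have := lam0_ge hn
  have : (1:ℝ) ≤ n := by exact_mod_cast hn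
  nlinarith [lam0_ge hn]



lemma integrableOn_exp_neg_abs_Ioi {c : ℝ} (hc : 0 < c) :
    IntegrableOn (fun u : ℝ => Real.exp (-c * |u|)) (Ioi 0) := by
  apply (exp_neg_integrableOn_Ioi 0 hc).congr_fun ?_ measurableSet_Ioi
  intro u hu
  simp only []
  rw [abs_of_pos hu]

lemma integrable_exp_neg_abs {c : ℝ} (hc : 0 < c) :
    Integrable (fun u : ℝ => Real.exp (-c * |u|)) := by
  have h1 := integrableOn_exp_neg_abs_Ioi hc
  have h2 : IntegrableOn (fun u : ℝ => Real.exp (-c * |u|)) (Iic 0) := by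
    rw [← Measure.map_neg_eq_self (volume : Measure ℝ)]
    have m : MeasurableEmbedding fun x : ℝ => -x :=
      (Homeomorph.neg ℝ).measurableEmbedding
    rw [m.integrableOn_map_iff]
    simp_rw [Function.comp_def, abs_neg, neg_preimage, neg_Iic, neg_zero]
    exact Iff.mpr integrableOn_Ici_iff_integrableOn_Ioi h1
  have := h2.union h1
  rwa [Iic_union_Ioi, integrableOn_univ] at this

lemma integral_exp_neg_abs {c : ℝ} (hc : 0 < c) :
    ∫ u : ℝ, Real.exp (-c * |u|) = 2 / c := by
  have : ∫ u : ℝ, Real.exp (-c * |u|) = 2 * ∫ u in Ioi (0:ℝ), Real.exp (-c * u) := by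
    rw [← integral_comp_abs (f := fun u => Real.exp (-c * u))]
  rw [this]
  have h2 : ∫ u in Ioi (0:ℝ), Real.exp (-c * u) = c⁻¹ * ∫ u in Ioi (0:ℝ), Real.exp (-u) := by
    have := integral_comp_mul_left_Ioi (fun u => Real.exp (-u)) 0 hc
    simp only [mul_zero, smul_eq_mul] at this
    rw [← this]
    congr 1 with u
    ring_nf
  rw [h2, integral_exp_neg_Ioi_zero]
  field_simp


-- pointwise bounds
lemma gamma0_pos {n : ℕ} (hn : 1 ≤ n) (x : ℝ) : 0 < gamma0 n x := by
  rw [gamma0]; exact mul_pos (by linarith [lam0_pos hn]) (Real.exp_pos _)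

lemma gamma1_pos (x : ℝ) : 0 < gamma1 x := by
  rw [gamma1, lam1]
  have := Real.pi_pos
  have h : (0:ℝ) < 1 + 0.05^2 * x^2 := by positivity
  positivity

lemma abs_mul_gamma0_le {n : ℕ} (hn : 1 ≤ n) (u : ℝ) :
    |u| * gamma0 n u ≤ 1/2 * Real.exp (-(lam0 n / 2) * |u|) := by
  have hl := lam0_pos hn
  rw [gamma0]
  have key : lam0 n * |u| ≤ Real.exp (lam0 n * |u| / 2) := by
    set s := lam0 n * |u| with hs
    have hs0 : 0 ≤ s := by positivity
    have h1 : (1 + s/4) ≤ Real.exp (s/4) := by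
      have := Real.add_one_le_exp (s/4); linarith
    have h2 : Real.exp (s/2) = Real.exp (s/4) * Real.exp (s/4) := by
      rw [← Real.exp_add]; ring_nf
    nlinarith [Real.exp_pos (s/4), sq_nonneg (s - 4)]
  have hE : Real.exp (-(lam0 n) * |u|) = Real.exp (-(lam0 n / 2) * |u|) * Real.exp (-(lam0 n / 2) * |u|) := by
    rw [← Real.exp_add]; ring_nf
  rw [hE]
  have h3 : lam0 n * |u| * Real.exp (-(lam0 n / 2) * |u|) ≤ 1 := by
    have h4 : Real.exp (-(lam0 n / 2) * |u|) = (Real.exp (lam0 n * |u| / 2))⁻¹ := by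
      rw [← Real.exp_neg]; ring_nf
    rw [h4]
    rw [mul_inv_le_iff₀ (Real.exp_pos _)]
    linarith [key]
  have he : 0 ≤ Real.exp (-(lam0 n / 2) * |u|) := (Real.exp_pos _).le
  nlinarith [abs_nonneg u]

-- integrability
lemma integrable_gamma0 {n : ℕ} (hn : 1 ≤ n) : Integrable (gamma0 n) := by
  have := (integrable_exp_neg_abs (lam0_pos hn)).const_mul (lam0 n / 2)
  exact this.congr (Filter.Eventually.of_forall fun u => rfl)

lemma integrable_gamma1 : Integrable gamma1 := by
  have h : Integrable (fun u : ℝ => (1 + (lam1 * u)^2)⁻¹) := by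
    have := integrable_inv_one_add_sq.comp_mul_left' (R := lam1) (by norm_num [lam1])
    exact this
  have h2 := h.const_mul (lam1 / Real.pi)
  apply h2.congr (Filter.Eventually.of_forall fun u => ?_)
  rw [gamma1]; ring_nf



lemma continuous_phi : Continuous phi := by
  apply Continuous.div_const
  exact (Real.continuous_exp.comp (by continuity))

lemma continuous_gamma0 (n : ℕ) : Continuous (gamma0 n) := by
  apply Continuous.mul continuous_const
  exact Real.continuous_exp.comp (by continuity)

lemma continuous_gamma1 : Continuous gamma1 := by
  apply Continuous.mul continuous_const
  apply Continuous.inv₀ (by continuity)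
  intro x; positivity

lemma integrable_phi_mul_gamma0 {n : ℕ} (hn : 1 ≤ n) (x : ℝ) :
    Integrable (fun u => phi (x - u) * gamma0 n u) := by
  apply (integrable_gamma0 hn).bdd_mul (c := 1)
    ((continuous_phi.comp (by continuity)).aestronglyMeasurable)
  exact Filter.Eventually.of_forall fun u => by simp only [Function.comp_apply, Real.norm_eq_abs]; rw [abs_of_pos (phi_pos _)]; exact phi_le_one _

lemma integrable_phi_mul_gamma1 (x : ℝ) :
    Integrable (fun u => phi (x - u) * gamma1 u) := by
  apply integrable_gamma1.bdd_mul (c := 1)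
    ((continuous_phi.comp (by continuity)).aestronglyMeasurable)
  exact Filter.Eventually.of_forall fun u => by simp only [Function.comp_apply, Real.norm_eq_abs]; rw [abs_of_pos (phi_pos _)]; exact phi_le_one _

lemma integrable_phi : Integrable phi := by
  have h := (integrable_exp_neg_mul_sq (b := (1:ℝ)/2) (by norm_num)).div_const (Real.sqrt (2*Real.pi))
  apply h.congr (Filter.Eventually.of_forall fun u => ?_)
  rw [phi]; ring_nf

lemma integrable_phi_mul_gamma1_swap (x : ℝ) :
    Integrable (fun u => phi u * gamma1 (x - u)) := by
  apply (integrable_phi.const_mul (lam1 / Real.pi)).mono'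
    (continuous_phi.mul (continuous_gamma1.comp (by continuity))).aestronglyMeasurable
  apply Filter.Eventually.of_forall fun u => ?_
  simp only [Function.comp_apply, Real.norm_eq_abs, Pi.mul_apply]
  rw [abs_of_pos (mul_pos (phi_pos _) (gamma1_pos _))]
  have h1 : gamma1 (x - u) ≤ lam1 / Real.pi := by
    rw [gamma1]
    have hp : (0:ℝ) < lam1 / Real.pi := by rw [lam1]; positivity
    have h2 : (1 + lam1^2*(x-u)^2)⁻¹ ≤ 1 := by
      rw [inv_le_one_iff₀]; right; nlinarith [sq_nonneg (lam1*(x-u))]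
    nlinarith
  have := (phi_pos u).le
  calc phi u * gamma1 (x - u) ≤ phi u * (lam1 / Real.pi) := by nlinarith
    _ = lam1 / Real.pi * phi u := by ring

lemma integrable_abs_mul_phi_gamma0 {n : ℕ} (hn : 1 ≤ n) (x : ℝ) :
    Integrable (fun u => |u| * (phi (x - u) * gamma0 n u)) := by
  have hl := lam0_pos hn
  apply ((integrable_exp_neg_abs (c := lam0 n / 2) (by linarith)).const_mul (1/2)).mono'
    ((continuous_abs.mul ((continuous_phi.comp (by continuity)).mul (continuous_gamma0 n))).aestronglyMeasurable)
  apply Filter.Eventually.of_forall fun u => ?_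
  simp only [Function.comp_apply, Real.norm_eq_abs, Pi.mul_apply]
  have h0 : (0:ℝ) ≤ |u| * (phi (x-u) * gamma0 n u) :=
    mul_nonneg (abs_nonneg _) (mul_nonneg (phi_pos _).le (gamma0_pos hn _).le)
  rw [abs_of_nonneg h0]
  have h1 := abs_mul_gamma0_le hn u
  have h2 := phi_le_one (x - u)
  have h3 := (phi_pos (x-u)).le
  have h4 := (gamma0_pos hn u).le
  have h5 := abs_nonneg u
  nlinarith [mul_le_mul_of_nonneg_left h2 (mul_nonneg h5 h4)]

lemma integrable_mul_phi_gamma0 {n : ℕ} (hn : 1 ≤ n) (x : ℝ) :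
    Integrable (fun u => u * (phi (x - u) * gamma0 n u)) := by
  apply (integrable_abs_mul_phi_gamma0 hn x).mono'
    ((continuous_id.mul ((continuous_phi.comp (by continuity)).mul (continuous_gamma0 n))).aestronglyMeasurable)
  apply Filter.Eventually.of_forall fun u => ?_
  simp only [Function.comp_apply, Real.norm_eq_abs, id_eq, Pi.mul_apply]
  rw [abs_mul]
  have h0 : (0:ℝ) ≤ phi (x-u) * gamma0 n u :=
    mul_nonneg (phi_pos _).le (gamma0_pos hn _).le
  rw [abs_of_nonneg h0]

lemma g0_pos {n : ℕ} (hn : 1 ≤ n) (x : ℝ) : 0 < g0 n x := by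
  rw [g0]
  rw [integral_pos_iff_support_of_nonneg]
  · have : Function.support (fun u => phi (x - u) * gamma0 n u) = univ := by
      ext u; simp only [Function.mem_support, mem_univ, iff_true]
      exact (mul_pos (phi_pos _) (gamma0_pos hn _)).ne'
    rw [this]
    simp [volume_univ]
  · intro u; exact (mul_pos (phi_pos _) (gamma0_pos hn _)).le
  · exact integrable_phi_mul_gamma0 hn x

lemma g1_pos (x : ℝ) : 0 < g1 x := by
  rw [g1]
  rw [integral_pos_iff_support_of_nonneg]
  · have : Function.support (fun u => phi (x - u) * gamma1 u) = univ := by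
      ext u; simp only [Function.mem_support, mem_univ, iff_true]
      exact (mul_pos (phi_pos _) (gamma1_pos _)).ne'
    rw [this]
    simp [volume_univ]
  · intro u; exact (mul_pos (phi_pos _) (gamma1_pos _)).le
  · exact integrable_phi_mul_gamma1 x


lemma abs_mul_phi_le (t : ℝ) : |t| * phi t ≤ 1 := by
  have h1 : |t| ≤ Real.exp (t^2/2) := by
    have := Real.add_one_le_exp (t^2/2)
    nlinarith [sq_nonneg (|t| - 1), sq_abs t]
  have h2 : |t| * Real.exp (-t^2/2) ≤ 1 := by
    rw [show -t^2/2 = -(t^2/2) by ring, Real.exp_neg]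
    rw [mul_inv_le_iff₀ (Real.exp_pos _), one_mul]
    exact h1
  rw [phi]
  rw [div_eq_mul_inv, show ∀ a b c : ℝ, a * (b * c) = a * b * c from fun a b c => by ring]
  have h3 := sqrt2pi_ge
  have h4 := abs_nonneg t
  have h5 := (Real.exp_pos (-t^2/2)).le
  calc |t| * Real.exp (-t^2/2) * (Real.sqrt (2*Real.pi))⁻¹ ≤ |t| * Real.exp (-t^2/2) * 1 := by
        apply mul_le_mul_of_nonneg_left ?_ (by positivity)
        rw [inv_le_one_iff₀]; right; linarith
    _ ≤ 1 := by rw [mul_one]; exact h2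

lemma hasDerivAt_phi_sub (u x : ℝ) :
    HasDerivAt (fun y => phi (y - u)) (-(x - u) * phi (x - u)) x := by
  have h1 : HasDerivAt (fun y : ℝ => y - u) 1 x := (hasDerivAt_id x).sub_const u
  have h2 : HasDerivAt (fun t : ℝ => Real.exp (-t^2/2) / Real.sqrt (2*Real.pi))
      (-(x-u) * (Real.exp (-(x-u)^2/2) / Real.sqrt (2*Real.pi))) (x - u) := by
    have h3 : HasDerivAt (fun t : ℝ => -t^2/2) (-(x-u)) (x - u) := by
      have := ((hasDerivAt_pow 2 (x-u)).neg).div_const 2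
      simpa using this.congr_deriv (by ring)
    have h4 := (h3.exp).div_const (Real.sqrt (2*Real.pi))
    exact h4.congr_deriv (by ring)
  have := h2.comp x h1
  simp only [mul_one] at this
  exact this.congr_deriv (by rw [phi])

lemma hasDerivAt_g0 {n : ℕ} (hn : 1 ≤ n) (x : ℝ) :
    HasDerivAt (g0 n) (-x * g0 n x + ∫ u, u * (phi (x - u) * gamma0 n u)) x := by
  have key := hasDerivAt_integral_of_dominated_loc_of_deriv_le (μ := volume)
      (F := fun y u => phi (y - u) * gamma0 n u)
      (F' := fun y u => -(y - u) * (phi (y - u) * gamma0 n u))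
      (x₀ := x) (bound := gamma0 n) (s := Metric.ball x 1) (Metric.ball_mem_nhds x one_pos)
      (Filter.Eventually.of_forall fun y =>
        ((continuous_phi.comp (by continuity)).mul (continuous_gamma0 n)).aestronglyMeasurable)
      (integrable_phi_mul_gamma0 hn x)
      (((continuous_const.sub continuous_id).neg.mul
        ((continuous_phi.comp (by continuity)).mul (continuous_gamma0 n))).aestronglyMeasurable)
      (Filter.Eventually.of_forall fun u y _ => ?_)
      (integrable_gamma0 hn)
      (Filter.Eventually.of_forall fun u y _ => ?_)
  · obtain ⟨-, hd⟩ := key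
    have heq : (∫ u, -(x - u) * (phi (x - u) * gamma0 n u))
        = -x * g0 n x + ∫ u, u * (phi (x - u) * gamma0 n u) := by
      have h1 : ∀ u : ℝ, -(x - u) * (phi (x - u) * gamma0 n u)
          = -x * (phi (x - u) * gamma0 n u) + u * (phi (x - u) * gamma0 n u) := by
        intro u; ring
      rw [integral_congr_ae (Filter.Eventually.of_forall h1)]
      rw [integral_add ((integrable_phi_mul_gamma0 hn x).const_mul _) (integrable_mul_phi_gamma0 hn x)]
      rw [MeasureTheory.integral_const_mul, g0]
    rw [← heq]
    exact hd
  · -- bound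
    rw [Real.norm_eq_abs, abs_mul, abs_mul]
    have h1 : |-(y-u)| * |phi (y-u)| ≤ 1 := by
      rw [abs_neg, abs_of_pos (phi_pos _)]
      exact abs_mul_phi_le _
    have h2 : |gamma0 n u| = gamma0 n u := abs_of_pos (gamma0_pos hn u)
    rw [h2]
    rw [← mul_assoc]
    calc |(-(y-u))| * |phi (y-u)| * gamma0 n u ≤ 1 * gamma0 n u := by
          apply mul_le_mul_of_nonneg_right h1 (gamma0_pos hn u).le
      _ = gamma0 n u := one_mul _
  · -- diff
    exact ((hasDerivAt_phi_sub u y).mul_const (gamma0 n u)).congr_deriv (by ring)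


def dgamma1 (t : ℝ) : ℝ := lam1 / Real.pi * (-(2 * lam1^2 * t) / (1 + lam1^2 * t^2)^2)

lemma hasDerivAt_gamma1 (t : ℝ) : HasDerivAt gamma1 (dgamma1 t) t := by
  have h1 : HasDerivAt (fun s : ℝ => 1 + lam1^2 * s^2) (2 * lam1^2 * t) t := by
    have h0 := ((hasDerivAt_pow 2 t).const_mul (lam1^2)).const_add 1
    exact h0.congr_deriv (by push_cast; ring)
  have h2 : (1 + lam1^2 * t^2) ≠ 0 := by positivity
  have h3 := (h1.inv h2).const_mul (lam1 / Real.pi)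
  exact h3.congr_deriv (by rw [dgamma1])

lemma abs_dgamma1_le (t : ℝ) : |dgamma1 t| ≤ lam1 * gamma1 t := by
  have hpi := Real.pi_pos
  have hq : (0:ℝ) < 1 + lam1^2 * t^2 := by positivity
  have hl1 : (0:ℝ) < lam1 := by rw [lam1]; norm_num
  have habs : |dgamma1 t| = lam1 / Real.pi * (2 * lam1^2 * |t|) / (1 + lam1^2 * t^2)^2 := by
    rw [dgamma1, abs_mul, abs_div, abs_div, abs_neg, abs_of_pos hl1, abs_of_pos hpi, abs_mul,
      abs_mul, abs_of_pos (show (0:ℝ) < (2:ℝ) by norm_num),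
      abs_of_pos (show (0:ℝ) < lam1^2 by positivity),
      abs_of_pos (show (0:ℝ) < (1+lam1^2*t^2)^2 by positivity)]
    ring
  rw [habs, gamma1, div_le_iff₀ (by positivity)]
  have key : 2 * lam1 * |t| ≤ 1 + lam1^2 * t^2 := by
    nlinarith [sq_nonneg (1 - lam1 * |t|), sq_abs t]
  have hr : lam1 * (lam1 / Real.pi * (1 + lam1^2*t^2)⁻¹) * (1+lam1^2*t^2)^2
      = lam1 * (lam1 / Real.pi) * (1+lam1^2*t^2) := by
    field_simp
  rw [hr]
  calc lam1 / Real.pi * (2 * lam1^2 * |t|)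
      = (lam1 * (lam1 / Real.pi)) * (2 * lam1 * |t|) := by ring
    _ ≤ (lam1 * (lam1 / Real.pi)) * (1 + lam1^2*t^2) := by
        apply mul_le_mul_of_nonneg_left key (by positivity)
    _ = lam1 * (lam1 / Real.pi) * (1+lam1^2*t^2) := by ring

lemma g1_swap (x : ℝ) : g1 x = ∫ u, phi u * gamma1 (x - u) := by
  rw [g1, ← MeasureTheory.integral_sub_left_eq_self (fun v => phi v * gamma1 (x - v)) volume x]
  congr 1 with u
  have : x - (x - u) = u := by ring
  simp only [this]

lemma gamma1_le (t : ℝ) : gamma1 t ≤ lam1 / Real.pi := by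
  rw [gamma1]
  have hp : (0:ℝ) < lam1 / Real.pi := by rw [lam1]; positivity
  have h2 : (1 + lam1^2*t^2)⁻¹ ≤ 1 := by
    rw [inv_le_one_iff₀]; right; nlinarith [sq_nonneg (lam1*t)]
  nlinarith

lemma integrable_phi_mul_dgamma1 (x : ℝ) :
    Integrable (fun u => phi u * dgamma1 (x - u)) := by
  apply (integrable_phi.const_mul (lam1 * (lam1 / Real.pi))).mono'
  · apply Continuous.aestronglyMeasurable
    apply continuous_phi.mul
    have : Continuous dgamma1 := by
      apply Continuous.mul continuous_const
      apply Continuous.div (by continuity) (by continuity)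
      intro t; positivity
    exact this.comp (by continuity)
  apply Filter.Eventually.of_forall fun u => ?_
  simp only [Function.comp_apply, Real.norm_eq_abs]
  rw [abs_mul, abs_of_pos (phi_pos u)]
  calc phi u * |dgamma1 (x-u)| ≤ phi u * (lam1 * (lam1 / Real.pi)) := by
        apply mul_le_mul_of_nonneg_left ?_ (phi_pos u).le
        calc |dgamma1 (x-u)| ≤ lam1 * gamma1 (x-u) := abs_dgamma1_le _
          _ ≤ lam1 * (lam1 / Real.pi) := by
              apply mul_le_mul_of_nonneg_left (gamma1_le _) (by rw [lam1]; norm_num)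
    _ = lam1 * (lam1 / Real.pi) * phi u := by ring

lemma hasDerivAt_g1 (x : ℝ) :
    HasDerivAt g1 (∫ u, phi u * dgamma1 (x - u)) x := by
  have key := hasDerivAt_integral_of_dominated_loc_of_deriv_le (μ := volume)
      (F := fun y u => phi u * gamma1 (y - u))
      (F' := fun y u => phi u * dgamma1 (y - u))
      (x₀ := x) (bound := fun u => lam1 * (lam1 / Real.pi) * phi u) (s := Metric.ball x 1) (Metric.ball_mem_nhds x one_pos)
      (Filter.Eventually.of_forall fun y =>
        (continuous_phi.mul (continuous_gamma1.comp (by continuity))).aestronglyMeasurable)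
      (integrable_phi_mul_gamma1_swap x)
      ?_ (Filter.Eventually.of_forall fun u y _ => ?_)
      (integrable_phi.const_mul _)
      (Filter.Eventually.of_forall fun u y _ => ?_)
  · obtain ⟨-, hd⟩ := key
    have : (fun y => ∫ u, phi u * gamma1 (y - u)) = g1 := by
      ext y; rw [g1_swap]
    rwa [this] at hd
  · apply Continuous.aestronglyMeasurable
    apply continuous_phi.mul
    have : Continuous dgamma1 := by
      apply Continuous.mul continuous_const
      apply Continuous.div (by continuity) (by continuity)
      intro t; positivity
    exact this.comp (by continuity)
  · rw [Real.norm_eq_abs, abs_mul, abs_of_pos (phi_pos u)]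
    calc phi u * |dgamma1 (y-u)| ≤ phi u * (lam1 * (lam1 / Real.pi)) := by
          apply mul_le_mul_of_nonneg_left ?_ (phi_pos u).le
          calc |dgamma1 (y-u)| ≤ lam1 * gamma1 (y-u) := abs_dgamma1_le _
            _ ≤ lam1 * (lam1 / Real.pi) := by
                apply mul_le_mul_of_nonneg_left (gamma1_le _) (by rw [lam1]; norm_num)
      _ = lam1 * (lam1 / Real.pi) * phi u := by ring
  · have h1 : HasDerivAt (fun y : ℝ => y - u) 1 y := (hasDerivAt_id y).sub_const u
    have h2 := ((hasDerivAt_gamma1 (y - u)).comp y h1).const_mul (phi u)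
    simpa using h2.congr_deriv (by ring)

lemma abs_deriv_g1_le (x : ℝ) : |∫ u, phi u * dgamma1 (x - u)| ≤ lam1 * g1 x := by
  calc |∫ u, phi u * dgamma1 (x - u)| ≤ ∫ u, |phi u| * |dgamma1 (x - u)| :=
        (by
        have := MeasureTheory.norm_integral_le_integral_norm (μ := volume) (f := fun u => phi u * dgamma1 (x - u))
        simpa [Real.norm_eq_abs, abs_mul] using this)
    _ ≤ ∫ u, lam1 * (phi u * gamma1 (x - u)) := by
        apply integral_mono
          ((integrable_phi_mul_dgamma1 x).abs.congr
            (Filter.Eventually.of_forall fun u => (abs_mul _ _)))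
          ((integrable_phi_mul_gamma1_swap x).const_mul _)
        intro u
        simp only []
        rw [abs_of_pos (phi_pos u)]
        calc phi u * |dgamma1 (x-u)| ≤ phi u * (lam1 * gamma1 (x-u)) :=
              mul_le_mul_of_nonneg_left (abs_dgamma1_le _) (phi_pos u).le
          _ = lam1 * (phi u * gamma1 (x-u)) := by ring
    _ = lam1 * g1 x := by rw [MeasureTheory.integral_const_mul, g1_swap]


lemma g0_lower {n : ℕ} (hn : 1 ≤ n) {x : ℝ} (hx : 0.1 ≤ x) :
    0.18 * phi (x + 1) ≤ g0 n x := by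
  have hl := lam0_pos hn
  have hl12 : (12:ℝ) ≤ lam0 n := by
    have := lam0_ge hn
    have h1 : (1:ℝ) ≤ n := by exact_mod_cast hn
    nlinarith
  set s : Set ℝ := Icc 0 (1 / lam0 n) with hs
  have hmeas : MeasurableSet s := measurableSet_Icc
  have hc : ∀ u ∈ s, phi (x+1) * (lam0 n / 2) * Real.exp (-1) ≤ phi (x-u) * gamma0 n u := by
    intro u hu
    obtain ⟨hu0, hu1⟩ := hu
    have hu1' : u ≤ 1 := by
      calc u ≤ 1 / lam0 n := hu1
        _ ≤ 1 := by rw [div_le_one hl]; linarith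
    have hphi : phi (x+1) ≤ phi (x-u) := by
      apply phi_anti
      rw [abs_of_pos (by linarith : (0:ℝ) < x + 1)]
      rw [abs_le]
      constructor <;> linarith
    have hg : (lam0 n / 2) * Real.exp (-1) ≤ gamma0 n u := by
      rw [gamma0]
      apply mul_le_mul_of_nonneg_left ?_ (by linarith)
      rw [Real.exp_le_exp, abs_of_nonneg hu0]
      have hle : lam0 n * u ≤ 1 := by
        calc lam0 n * u ≤ lam0 n * (1 / lam0 n) := by
              apply mul_le_mul_of_nonneg_left hu1 hl.le
          _ = 1 := by field_simp
      linarith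
    calc phi (x+1) * (lam0 n / 2) * Real.exp (-1)
        = phi (x+1) * ((lam0 n/2) * Real.exp (-1)) := by ring
      _ ≤ phi (x-u) * gamma0 n u := by
          apply mul_le_mul hphi hg (by positivity) (phi_pos _).le
  have hint := integrable_phi_mul_gamma0 hn x
  have hstep : (phi (x+1) * (lam0 n / 2) * Real.exp (-1)) * (volume s).toReal
      ≤ ∫ u in s, phi (x - u) * gamma0 n u := by
    apply setIntegral_ge_of_const_le_real hmeas ?_ hc hint.integrableOn
    rw [hs]
    exact (measure_Icc_lt_top).ne
  have hvol : (volume s).toReal = 1 / lam0 n := by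
    rw [hs, Real.volume_Icc, sub_zero]
    rw [ENNReal.toReal_ofReal (by positivity)]
  have hstep2 : ∫ u in s, phi (x - u) * gamma0 n u ≤ g0 n x := by
    rw [g0]
    apply setIntegral_le_integral hint
    apply Filter.Eventually.of_forall fun u => ?_
    exact mul_nonneg (phi_pos _).le (gamma0_pos hn _).le
  have hexp : (0.36:ℝ) ≤ Real.exp (-1) := by
    rw [Real.exp_neg]
    have h1 : Real.exp 1 ≤ 2.7182818286 := Real.exp_one_lt_d9.le
    have h2 : Real.exp 1 * (Real.exp 1)⁻¹ = 1 := mul_inv_cancel₀ (Real.exp_pos 1).ne'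
    nlinarith [Real.exp_pos 1, inv_pos.2 (Real.exp_pos 1)]
  have hfinal : phi (x+1) * (lam0 n / 2) * Real.exp (-1) * (1/lam0 n) ≤ g0 n x := by
    rw [← hvol]
    exact (hstep.trans hstep2)
  calc (0.18:ℝ) * phi (x+1) ≤ phi (x+1) * (lam0 n / 2) * Real.exp (-1) * (1/lam0 n) := by
        have e1 : phi (x+1) * (lam0 n/2) * Real.exp (-1) * (1/lam0 n)
            = phi (x+1) * (Real.exp (-1)/2) * (lam0 n * (1/lam0 n)) := by ring
        rw [e1, show lam0 n * (1/lam0 n) = 1 by field_simp, mul_one]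
        nlinarith [phi_pos (x+1)]
    _ ≤ g0 n x := hfinal


lemma exp_cube_lower {t : ℝ} (ht : 0 ≤ t) : t^3/27 ≤ Real.exp t := by
  have h1 : 1 + t/3 ≤ Real.exp (t/3) := by
    have := Real.add_one_le_exp (t/3); linarith
  have h2 : Real.exp t = (Real.exp (t/3))^3 := by
    rw [← Real.exp_nat_mul]; congr 1; push_cast; ring
  have h3 : (t/3)^3 ≤ (1 + t/3)^3 := by
    apply pow_le_pow_left₀ (by linarith) (by linarith)
  calc t^3/27 = (t/3)^3 := by ring
    _ ≤ (1 + t/3)^3 := h3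
    _ ≤ (Real.exp (t/3))^3 := by
        apply pow_le_pow_left₀ (by linarith) h1
    _ = Real.exp t := h2.symm

set_option maxHeartbeats 1000000 in
lemma R_le {n : ℕ} (hN : 10^8 ≤ n) {x : ℝ} (hx1 : 0.1 ≤ x)
    (hx2 : x^2 ≤ 2 * Real.log n) :
    |∫ u, u * (phi (x - u) * gamma0 n u)| ≤ 0.04 * g0 n x := by
  have hn : 1 ≤ n := le_trans (by norm_num) hN
  have hl := lam0_pos hn
  have hn8 : (10^8:ℝ) ≤ (n:ℝ) := by exact_mod_cast hN
  have hnR : (1:ℝ) ≤ (n:ℝ) := by linarith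
  have hl12n : 12 * (n:ℝ) ≤ lam0 n := lam0_ge hn
  -- Step 1 : |R| ≤ T
  have step1 : |∫ u, u * (phi (x - u) * gamma0 n u)| ≤ ∫ u, |u| * (phi (x - u) * gamma0 n u) := by
    have h := MeasureTheory.norm_integral_le_integral_norm (μ := volume)
      (f := fun u => u * (phi (x - u) * gamma0 n u))
    rw [Real.norm_eq_abs] at h
    apply h.trans_eq
    congr 1 with u
    rw [Real.norm_eq_abs, abs_mul,
      abs_of_nonneg (mul_nonneg (phi_pos _).le (gamma0_pos hn _).le)]
  set s : Set ℝ := Icc (-0.01) 0.01 with hsdef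
  have hmeas : MeasurableSet s := measurableSet_Icc
  have hintabs := integrable_abs_mul_phi_gamma0 hn x
  have hsplit : (∫ u in s, |u| * (phi (x - u) * gamma0 n u))
      + (∫ u in sᶜ, |u| * (phi (x - u) * gamma0 n u))
      = ∫ u, |u| * (phi (x - u) * gamma0 n u) :=
    integral_add_compl hmeas hintabs
  -- the dominating integrable functions
  have hint_half : Integrable (fun u : ℝ => 1/2 * Real.exp (-(lam0 n/2) * |u|)) :=
    (integrable_exp_neg_abs (by linarith : (0:ℝ) < lam0 n/2)).const_mul _
  have hint_quarter : Integrable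
      (fun u : ℝ => 1/2 * Real.exp (-(lam0 n/400)) * Real.exp (-(lam0 n/4) * |u|)) :=
    (integrable_exp_neg_abs (by linarith : (0:ℝ) < lam0 n/4)).const_mul _
  -- Step 3 : small-u part
  have step3 : (∫ u in s, |u| * (phi (x - u) * gamma0 n u))
      ≤ phi (x - 0.01) * (2 / lam0 n) := by
    have hmono : (∫ u in s, |u| * (phi (x - u) * gamma0 n u))
        ≤ ∫ u in s, phi (x - 0.01) * (1/2 * Real.exp (-(lam0 n/2) * |u|)) := by
      apply setIntegral_mono_on hintabs.integrableOn
        ((hint_half.const_mul (phi (x - 0.01))).integrableOn) hmeas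
      intro u hu
      obtain ⟨hu1, hu2⟩ := hu
      have hphi : phi (x - u) ≤ phi (x - 0.01) := by
        apply phi_anti
        rw [abs_of_nonneg (by linarith : (0:ℝ) ≤ x - 0.01),
          abs_of_nonneg (by linarith : (0:ℝ) ≤ x - u)]
        linarith
      have hg := abs_mul_gamma0_le hn u
      have h1 := (phi_pos (x - u)).le
      have h2 := (gamma0_pos hn u).le
      have h3 := abs_nonneg u
      have h4 := (phi_pos (x - 0.01)).le
      have h5 : (0:ℝ) ≤ Real.exp (-(lam0 n/2) * |u|) := (Real.exp_pos _).le
      calc |u| * (phi (x-u) * gamma0 n u) = phi (x-u) * (|u| * gamma0 n u) := by ring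
        _ ≤ phi (x - 0.01) * (1/2 * Real.exp (-(lam0 n/2) * |u|)) := by
            apply mul_le_mul hphi hg (by positivity) h4
    have hval : (∫ u in s, phi (x - 0.01) * (1/2 * Real.exp (-(lam0 n/2) * |u|)))
        ≤ phi (x - 0.01) * (2 / lam0 n) := by
      have h6 : (∫ u in s, phi (x - 0.01) * (1/2 * Real.exp (-(lam0 n/2) * |u|)))
          ≤ ∫ u, phi (x - 0.01) * (1/2 * Real.exp (-(lam0 n/2) * |u|)) := by
        apply setIntegral_le_integral (hint_half.const_mul _)
        apply Filter.Eventually.of_forall fun u => ?_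
        exact mul_nonneg (phi_pos _).le (by positivity)
      have h7 : (∫ u, phi (x - 0.01) * (1/2 * Real.exp (-(lam0 n/2) * |u|)))
          = phi (x - 0.01) * (2 / lam0 n) := by
        rw [MeasureTheory.integral_const_mul]
        rw [MeasureTheory.integral_const_mul]
        rw [integral_exp_neg_abs (by linarith : (0:ℝ) < lam0 n/2)]
        rw [show (2:ℝ) / (lam0 n/2) = 4 / lam0 n by field_simp; ring]
        rw [show (1:ℝ)/2 * (4/lam0 n) = 2/lam0 n by field_simp; ring]
      linarith [h6, h7.le, h7.ge]
    linarith
  -- Step 4 : tail part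
  have step4 : (∫ u in sᶜ, |u| * (phi (x - u) * gamma0 n u))
      ≤ 4 * Real.exp (-(lam0 n/400)) / lam0 n := by
    have hmono : (∫ u in sᶜ, |u| * (phi (x - u) * gamma0 n u))
        ≤ ∫ u in sᶜ, 1/2 * Real.exp (-(lam0 n/400)) * Real.exp (-(lam0 n/4) * |u|) := by
      apply setIntegral_mono_on hintabs.integrableOn
        hint_quarter.integrableOn hmeas.compl
      intro u hu
      have habs : (0.01:ℝ) ≤ |u| := by
        rw [hsdef, mem_compl_iff, mem_Icc, not_and_or] at hu
        rcases hu with h | h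
        · push_neg at h
          rw [abs_of_neg (by linarith)]
          linarith
        · push_neg at h
          rw [abs_of_pos (by linarith)]
          linarith
      have hg := abs_mul_gamma0_le hn u
      have hphi := phi_le_one (x - u)
      have h1 := (phi_pos (x - u)).le
      have h2 := (gamma0_pos hn u).le
      have h3 := abs_nonneg u
      have hE : Real.exp (-(lam0 n/2) * |u|)
          ≤ Real.exp (-(lam0 n/400)) * Real.exp (-(lam0 n/4) * |u|) := by
        rw [← Real.exp_add, Real.exp_le_exp]
        have : lam0 n / 400 ≤ lam0 n / 4 * |u| := by
          calc lam0 n / 400 = lam0 n / 4 * 0.01 := by ring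
            _ ≤ lam0 n / 4 * |u| := by
                apply mul_le_mul_of_nonneg_left habs (by linarith)
        linarith
      calc |u| * (phi (x-u) * gamma0 n u) ≤ |u| * gamma0 n u := by
            nlinarith [mul_le_mul_of_nonneg_left hphi (mul_nonneg h3 h2)]
        _ ≤ 1/2 * Real.exp (-(lam0 n/2) * |u|) := hg
        _ ≤ 1/2 * Real.exp (-(lam0 n/400)) * Real.exp (-(lam0 n/4) * |u|) := by
            nlinarith [hE]
    have hval : (∫ u in sᶜ, 1/2 * Real.exp (-(lam0 n/400)) * Real.exp (-(lam0 n/4) * |u|))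
        ≤ 4 * Real.exp (-(lam0 n/400)) / lam0 n := by
      have h6 : (∫ u in sᶜ, 1/2 * Real.exp (-(lam0 n/400)) * Real.exp (-(lam0 n/4) * |u|))
          ≤ ∫ u, 1/2 * Real.exp (-(lam0 n/400)) * Real.exp (-(lam0 n/4) * |u|) := by
        apply setIntegral_le_integral hint_quarter
        apply Filter.Eventually.of_forall fun u => ?_
        positivity
      have h7 : (∫ u : ℝ, 1/2 * Real.exp (-(lam0 n/400)) * Real.exp (-(lam0 n/4) * |u|))
          = 4 * Real.exp (-(lam0 n/400)) / lam0 n := by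
        rw [MeasureTheory.integral_const_mul]
        rw [integral_exp_neg_abs (by linarith : (0:ℝ) < lam0 n/4)]
        rw [show (2:ℝ) / (lam0 n/4) = 8 / lam0 n by field_simp; ring]
        field_simp
        ring
      linarith [h6, h7.le]
    linarith
  -- key1
  set S := Real.exp (x^2/4) with hSdef
  have hS1 : 1 ≤ S := Real.one_le_exp (by positivity)
  have hS2 : S^2 ≤ (n:ℝ) := by
    have h1 : S^2 = Real.exp (x^2/2) := by
      rw [hSdef, sq, ← Real.exp_add]; ring_nf
    rw [h1]
    calc Real.exp (x^2/2) ≤ Real.exp (Real.log n) := by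
          rw [Real.exp_le_exp]; linarith
      _ = (n:ℝ) := Real.exp_log (by linarith)
  set K := Real.exp ((x+1)^2/2 - (x-0.01)^2/2) with hKdef
  have hD : K ≤ 7.4 * S := by
    have h1 : (x+1)^2/2 - (x-0.01)^2/2 ≤ 2 + x^2/4 := by
      nlinarith [sq_nonneg (x/2 - 1.01)]
    have h2 : Real.exp 2 ≤ 7.4 := by
      have h3 : Real.exp 2 = Real.exp 1 * Real.exp 1 := by
        rw [← Real.exp_add]; norm_num
      have := Real.exp_one_lt_d9.le
      rw [h3]; nlinarith [Real.exp_pos 1]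
    calc K ≤ Real.exp (2 + x^2/4) := Real.exp_le_exp.2 h1
      _ = Real.exp 2 * S := by rw [Real.exp_add]
      _ ≤ 7.4 * S := by nlinarith [Real.exp_pos (x^2/4), hS1]
  have key1 : phi (x - 0.01) * (2 / lam0 n) ≤ 0.003 * phi (x+1) := by
    have hrel : phi (x - 0.01) = K * phi (x+1) := by
      have hh : K * Real.exp (-(x+1)^2/2) = Real.exp (-(x-0.01)^2/2) := by
        rw [hKdef, ← Real.exp_add]; congr 1; ring
      rw [phi, phi, ← hh]; ring
    have h5 : K * 2 ≤ 0.003 * lam0 n := by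
      nlinarith [sq_nonneg (S - 412), hS2, hn8, hS1, hl12n, hD]
    have h6 : K * (2 / lam0 n) ≤ 0.003 := by
      rw [mul_div_assoc', div_le_iff₀ hl]
      linarith
    calc phi (x - 0.01) * (2/lam0 n) = (K * (2/lam0 n)) * phi (x+1) := by
          rw [hrel]; ring
      _ ≤ 0.003 * phi (x+1) :=
          mul_le_mul_of_nonneg_right h6 (phi_pos _).le
  -- key2
  have key2 : 4 * Real.exp (-(lam0 n/400)) / lam0 n ≤ 0.003 * phi (x+1) := by
    set q := Real.exp (-(lam0 n/400)) with hqdef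
    have hq0 : 0 < q := Real.exp_pos _
    have hq : q * (lam0 n/400)^3 ≤ 27 := by
      have h1 := exp_cube_lower (t := lam0 n/400) (by linarith)
      have h2 : q * Real.exp (lam0 n/400) = 1 := by
        rw [hqdef, ← Real.exp_add]; simp
      nlinarith [Real.exp_pos (lam0 n/400)]
    have hp : 0.36 / (n:ℝ)^2 ≤ Real.exp (-(x+1)^2/2) := by
      have h1 : Real.exp (-(2 * Real.log n)) = ((n:ℝ)^2)⁻¹ := by
        rw [show -(2*Real.log n) = -(Real.log n) + -(Real.log n) by ring, Real.exp_add,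
          Real.exp_neg, Real.exp_log (by linarith : (0:ℝ) < (n:ℝ))]
        rw [sq]
        rw [mul_inv]
      have h2 : Real.exp (-1 + -(2*Real.log n)) ≤ Real.exp (-(x+1)^2/2) := by
        rw [Real.exp_le_exp]
        nlinarith [sq_nonneg (x-1)]
      have h3 : (0.36:ℝ) ≤ Real.exp (-1) := by
        rw [Real.exp_neg]
        have h4 : Real.exp 1 ≤ 2.7182818286 := Real.exp_one_lt_d9.le
        have h5 : Real.exp 1 * (Real.exp 1)⁻¹ = 1 := mul_inv_cancel₀ (Real.exp_pos 1).ne'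
        nlinarith [Real.exp_pos 1, inv_pos.2 (Real.exp_pos 1)]
      calc 0.36 / (n:ℝ)^2 = 0.36 * ((n:ℝ)^2)⁻¹ := by ring
        _ ≤ Real.exp (-1) * ((n:ℝ)^2)⁻¹ := by
            apply mul_le_mul_of_nonneg_right h3 (by positivity)
        _ = Real.exp (-1 + -(2*Real.log n)) := by rw [Real.exp_add, h1]
        _ ≤ Real.exp (-(x+1)^2/2) := h2
    have hphi : 0.12 / (n:ℝ)^2 ≤ phi (x+1) := by
      have h1 := sqrt2pi_le
      have hp2 : (0:ℝ) < (n:ℝ)^2 := by positivity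
      rw [phi]
      calc (0.12:ℝ) / (n:ℝ)^2 = (0.36 / (n:ℝ)^2) / 3 := by ring
        _ ≤ Real.exp (-(x+1)^2/2) / 3 := by
            apply div_le_div_of_nonneg_right hp (by norm_num)
        _ ≤ Real.exp (-(x+1)^2/2) / Real.sqrt (2*Real.pi) := by
            apply div_le_div_of_nonneg_left (Real.exp_pos _).le sqrt2pi_pos h1
    -- now show 4q/λ0 ≤ 0.00036/n² ≤ 0.003 φ(x+1)
    have hqx : q * (lam0 n)^3 ≤ 27 * 400^3 := by
      have h1 : (lam0 n/400)^3 = (lam0 n)^3 / 400^3 := by ring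
      rw [h1] at hq
      have h2 : (0:ℝ) < (400:ℝ)^3 := by norm_num
      calc q * (lam0 n)^3 = (q * ((lam0 n)^3/400^3)) * 400^3 := by field_simp
        _ ≤ 27 * 400^3 := by nlinarith
    have hmain : 4 * q / lam0 n ≤ 0.00036 / (n:ℝ)^2 := by
      rw [div_le_div_iff₀ hl (by positivity : (0:ℝ) < (n:ℝ)^2)]
      -- 4q n² ≤ 0.00036 λ0
      have hcancel : (4 * q * (n:ℝ)^2) * (lam0 n)^3 ≤ (0.00036 * lam0 n) * (lam0 n)^3 := by
        have h12 : (12*(n:ℝ))^4 ≤ (lam0 n)^4 := by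
          apply pow_le_pow_left₀ (by positivity) hl12n
        nlinarith [hqx, hn8, hnR, hq0, sq_nonneg ((n:ℝ)^2 - 10^16)]
      have := le_of_mul_le_mul_right hcancel (by positivity : (0:ℝ) < (lam0 n)^3)
      linarith
    calc 4 * q / lam0 n ≤ 0.00036 / (n:ℝ)^2 := hmain
      _ = 0.003 * (0.12 / (n:ℝ)^2) := by ring
      _ ≤ 0.003 * phi (x+1) := by
          apply mul_le_mul_of_nonneg_left hphi (by norm_num)
  -- combine
  have hlow := g0_lower hn hx1
  have hT : (∫ u, |u| * (phi (x - u) * gamma0 n u)) ≤ 0.006 * phi (x+1) := by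
    rw [← hsplit]
    calc (∫ u in s, |u| * (phi (x - u) * gamma0 n u))
        + (∫ u in sᶜ, |u| * (phi (x - u) * gamma0 n u))
        ≤ phi (x - 0.01) * (2/lam0 n) + 4 * Real.exp (-(lam0 n/400))/lam0 n := by
          linarith
      _ ≤ 0.003 * phi (x+1) + 0.003 * phi (x+1) := by linarith
      _ = 0.006 * phi (x+1) := by ring
  calc |∫ u, u * (phi (x - u) * gamma0 n u)| ≤ ∫ u, |u| * (phi (x - u) * gamma0 n u) := step1
    _ ≤ 0.006 * phi (x+1) := hT
    _ ≤ 0.04 * (0.18 * phi (x+1)) := by nlinarith [phi_pos (x+1)]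
    _ ≤ 0.04 * g0 n x := by nlinarith [hlow]


lemma hasDerivAt_betaSSL {n : ℕ} (hn : 1 ≤ n) (x : ℝ) :
    HasDerivAt (betaSSL n)
      (((∫ u, phi u * dgamma1 (x - u)) * g0 n x
        - g1 x * (-x * g0 n x + ∫ u, u * (phi (x - u) * gamma0 n u))) / (g0 n x)^2) x := by
  have h := ((hasDerivAt_g1 x).div (hasDerivAt_g0 hn x) (g0_pos hn x).ne').sub_const 1
  exact h


/-- Proposition 1: monotonicity of `β` for the SSL prior.
For `n` large enough, `β = g₁/g₀ - 1` is strictly increasing on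
`[2λ₁, √(2 log n)]`. -/
theorem betaSSL_strictMonoOn :
    ∃ N0 : ℕ, ∀ n : ℕ, N0 ≤ n →
      StrictMonoOn (betaSSL n) (Set.Icc (2 * lam1) (Real.sqrt (2 * Real.log n))) := by
  refine ⟨10^8, fun n hN => ?_⟩
  have hn : 1 ≤ n := le_trans (by norm_num) hN
  have hnR : (1:ℝ) ≤ (n:ℝ) := by exact_mod_cast hn
  have hlogn : 0 ≤ 2 * Real.log n := by
    have := Real.log_nonneg hnR
    linarith
  apply strictMonoOn_of_hasDerivWithinAt_pos (convex_Icc _ _)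
    (fun x _ => (hasDerivAt_betaSSL hn x).continuousAt.continuousWithinAt)
    (fun x _ => (hasDerivAt_betaSSL hn x).hasDerivWithinAt)
  intro x hx
  rw [interior_Icc, mem_Ioo] at hx
  obtain ⟨hxl, hxr⟩ := hx
  have hx1 : (0.1:ℝ) ≤ x := by
    rw [lam1] at hxl
    norm_num at hxl ⊢
    linarith
  have hx2 : x^2 ≤ 2 * Real.log n := by
    have h1 : x ≤ Real.sqrt (2 * Real.log n) := hxr.le
    have h2 := Real.sq_sqrt hlogn
    nlinarith [Real.sqrt_nonneg (2 * Real.log n)]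
  have hg0 := g0_pos hn x
  have hg1 := g1_pos x
  have hb1 := abs_deriv_g1_le x
  have hR := R_le hN hx1 hx2
  apply div_pos ?_ (by positivity)
  have h1 : (∫ u, phi u * dgamma1 (x - u)) * g0 n x ≥ -(0.05 * g1 x) * g0 n x := by
    have := abs_le.1 hb1
    rw [lam1] at this
    apply mul_le_mul_of_nonneg_right ?_ hg0.le
    norm_num at this ⊢
    linarith [this.1]
  have h2 : g1 x * (-x * g0 n x + ∫ u, u * (phi (x - u) * gamma0 n u))
      ≤ g1 x * (-(0.06) * g0 n x) := by
    apply mul_le_mul_of_nonneg_left ?_ hg1.le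
    have h3 : (∫ u, u * (phi (x - u) * gamma0 n u)) ≤ 0.04 * g0 n x :=
      (abs_le.1 hR).2
    nlinarith [mul_le_mul_of_nonneg_right hx1 hg0.le]
  nlinarith [mul_pos hg1 hg0]


end
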